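/- Let q be a prime power and n ≥ 1. Define N = 1 + Σ_{k | n} (1/k) · #{α ∈ F̄_q : [F_q(α):F_q] = k} restricted to α ∈ F_{q^n} (i.e., N = 1 + Σ_{k|n} (1/k) Σ_{d|k} μ(k/d) q^d). Then N = 1 + (1/n) q^n + Σ_{d | n, d ≠ n} (1/d) · (∏_{ℓ prime, ℓ | (n/d)} (1 − 1/ℓ)) · q^d. -/

import Mathlib

open ArithmeticFunction Finset
open scoped ArithmeticFunction.Moebius

lemma moebius_div_sum (N : ℕ) (hN : 0 < N) :
    ∑ m ∈ N.divisors, (μ m : ℚ) / m = ∏ p ∈ N.primeFactors, (1 - 1 / (p : ℚ)) := by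
  have h1 : ∀ n > 0, ∑ x ∈ n.divisorsAntidiagonal, (μ x.fst : ℚ) * (x.snd : ℚ)
      = (Nat.totient n : ℚ) := by
    rw [← sum_eq_iff_sum_mul_moebius_eq (f := fun d => (Nat.totient d : ℚ)) (g := fun n => (n : ℚ))]
    intro n _
    rw [← Nat.cast_sum]
    norm_cast
    exact Nat.sum_totient n
  have h2 := h1 N hN
  have hN' : (N : ℚ) ≠ 0 := Nat.cast_ne_zero.mpr hN.ne'
  have h3 : ∑ m ∈ N.divisors, (μ m : ℚ) / m
      = (∑ x ∈ N.divisorsAntidiagonal, (μ x.fst : ℚ) * (x.snd : ℚ)) / N := by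
    rw [Nat.sum_divisorsAntidiagonal (fun a b => (μ a : ℚ) * b), Finset.sum_div]
    refine Finset.sum_congr rfl fun m hm => ?_
    obtain ⟨hdvd, _⟩ := Nat.mem_divisors.mp hm
    have hm0 : (m : ℚ) ≠ 0 := Nat.cast_ne_zero.mpr (Nat.pos_of_mem_divisors hm).ne'
    rw [Nat.cast_div hdvd hm0]
    field_simp
  rw [h3, h2, Nat.totient_eq_mul_prod_factors, mul_div_cancel_left₀ _ hN']
  simp [one_div]

theorem stmt_17 (q n : ℕ) (hq : IsPrimePow q) (hn : 1 ≤ n) :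
    (1 : ℚ) + ∑ k ∈ n.divisors, (1 / (k : ℚ)) *
        ∑ d ∈ k.divisors, (μ (k / d) : ℚ) * (q : ℚ) ^ d
      = 1 + (1 / (n : ℚ)) * (q : ℚ) ^ n +
        ∑ d ∈ n.divisors.erase n, (1 / (d : ℚ)) *
          (∏ ℓ ∈ (n / d).primeFactors, (1 - 1 / (ℓ : ℚ))) * (q : ℚ) ^ d := by
  have hn0 : n ≠ 0 := by omega
  -- Step 1: swap order of summation
  have swap : ∑ k ∈ n.divisors, (1 / (k : ℚ)) * ∑ d ∈ k.divisors, (μ (k / d) : ℚ) * (q : ℚ) ^ d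
      = ∑ d ∈ n.divisors, ∑ e ∈ (n / d).divisors,
          (1 / ((d : ℚ) * e)) * ((μ e : ℚ) * (q : ℚ) ^ d) := by
    simp_rw [Finset.mul_sum]
    rw [Finset.sum_sigma', Finset.sum_sigma']
    refine Finset.sum_nbij' (i := fun x => ⟨x.2, x.1 / x.2⟩) (j := fun y => ⟨y.1 * y.2, y.1⟩)
      ?_ ?_ ?_ ?_ ?_
    · rintro ⟨k, d⟩ hx
      simp only [Finset.mem_sigma, Nat.mem_divisors] at hx ⊢
      obtain ⟨hkn, _⟩ := hx.1
      obtain ⟨hdk, hk0⟩ := hx.2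
      have hd0 : 0 < d := Nat.pos_of_ne_zero (by rintro rfl; exact hk0 (Nat.eq_zero_of_zero_dvd hdk))
      refine ⟨⟨hdk.trans hkn, hn0⟩, ?_,
        (Nat.div_pos (Nat.le_of_dvd (Nat.pos_of_ne_zero hn0) (hdk.trans hkn)) hd0).ne'⟩
      rw [Nat.dvd_div_iff_mul_dvd (hdk.trans hkn)]
      obtain ⟨c, rfl⟩ := hdk
      rw [Nat.mul_div_cancel_left _ hd0]
      exact hkn
    · rintro ⟨d, e⟩ hy
      simp only [Finset.mem_sigma, Nat.mem_divisors] at hy ⊢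
      obtain ⟨⟨hdn, _⟩, ⟨hednd, _⟩⟩ := hy
      have h1 : d * e ∣ n := (Nat.dvd_div_iff_mul_dvd hdn).mp hednd
      exact ⟨⟨h1, hn0⟩, Dvd.intro e rfl, fun h => hn0 (Nat.eq_zero_of_zero_dvd (h ▸ h1))⟩
    · rintro ⟨k, d⟩ hx
      simp only [Finset.mem_sigma, Nat.mem_divisors] at hx
      obtain ⟨_, ⟨hdk, hk0⟩⟩ := hx
      simp [Nat.mul_div_cancel' hdk]
    · rintro ⟨d, e⟩ hy
      simp only [Finset.mem_sigma, Nat.mem_divisors] at hy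
      have hd0 : 0 < d := Nat.pos_of_ne_zero
        (by rintro rfl; exact hn0 (Nat.eq_zero_of_zero_dvd hy.1.1))
      simp [Nat.mul_div_cancel_left _ hd0]
    · rintro ⟨k, d⟩ hx
      simp only [Finset.mem_sigma, Nat.mem_divisors] at hx
      obtain ⟨_, ⟨hdk, hk0⟩⟩ := hx
      simp only
      rw [← Nat.cast_mul, Nat.mul_div_cancel' hdk]
  rw [swap]
  -- Step 2: compute inner sums
  have inner : ∀ d ∈ n.divisors, ∑ e ∈ (n / d).divisors,
      (1 / ((d : ℚ) * e)) * ((μ e : ℚ) * (q : ℚ) ^ d)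
      = (1 / (d : ℚ)) * (∏ ℓ ∈ (n / d).primeFactors, (1 - 1 / (ℓ : ℚ))) * (q : ℚ) ^ d := by
    intro d hd
    obtain ⟨hdn, _⟩ := Nat.mem_divisors.mp hd
    have hd0 : (d : ℚ) ≠ 0 := Nat.cast_ne_zero.mpr (Nat.pos_of_mem_divisors hd).ne'
    have hnd : 0 < n / d := Nat.div_pos (Nat.le_of_dvd (Nat.pos_of_ne_zero hn0) hdn)
      (Nat.pos_of_mem_divisors hd)
    rw [← moebius_div_sum (n / d) hnd, Finset.mul_sum, Finset.sum_mul]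
    refine Finset.sum_congr rfl fun e he => ?_
    have he0 : (e : ℚ) ≠ 0 := Nat.cast_ne_zero.mpr (Nat.pos_of_mem_divisors he).ne'
    field_simp
  rw [Finset.sum_congr rfl inner]
  -- Step 3: pull out the d = n term
  rw [← Finset.add_sum_erase _ _ (Nat.mem_divisors_self n hn0)]
  have : (1 / (n : ℚ)) * (∏ ℓ ∈ (n / n).primeFactors, (1 - 1 / (ℓ : ℚ))) * (q : ℚ) ^ n
      = (1 / (n : ℚ)) * (q : ℚ) ^ n := by
    rw [Nat.div_self (Nat.pos_of_ne_zero hn0)]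
    simp
  rw [this, ← add_assoc]
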